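/- For every 0 ≤ δ < π/2, the Fubini-Study volume of the ball of radius δ centered at a point of ℂP^n equals (π^n/n!)·sin^{2n}(δ). -/

import Mathlib

open MeasureTheory Real

lemma aux_deriv {n : ℕ} (hn : 1 ≤ n) (y : ℝ) :
    HasDerivAt (fun y : ℝ => (y ^ 2 / (1 + y ^ 2)) ^ n / (2 * n))
      (y ^ (2 * n - 1) * ((1 + y ^ 2) ^ (n + 1))⁻¹) y := by
  have h1 : (0:ℝ) < 1 + y ^ 2 := by positivity
  have hg : HasDerivAt (fun y : ℝ => y ^ 2 / (1 + y ^ 2))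
      ((2 * y * (1 + y ^ 2) - y ^ 2 * (2 * y)) / (1 + y ^ 2) ^ 2) y := by
    have h2 : HasDerivAt (fun y : ℝ => y ^ 2) (2 * y) y := by
      simpa using (hasDerivAt_pow 2 y)
    have h3 : HasDerivAt (fun y : ℝ => 1 + y ^ 2) (2 * y) y := by
      exact h2.const_add 1
    exact h2.div h3 h1.ne'
  have hF : HasDerivAt (fun y : ℝ => (y ^ 2 / (1 + y ^ 2)) ^ n / (2 * n))
      ((n * (y ^ 2 / (1 + y ^ 2)) ^ (n - 1) *
        ((2 * y * (1 + y ^ 2) - y ^ 2 * (2 * y)) / (1 + y ^ 2) ^ 2)) / (2 * n)) y :=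
    (hg.pow n).div_const _
  convert hF using 1
  have hn' : (n:ℝ) ≠ 0 := Nat.cast_ne_zero.mpr (by omega)
  rw [div_pow]
  obtain ⟨m, rfl⟩ : ∃ m, n = m + 1 := ⟨n - 1, by omega⟩
  simp only [Nat.add_sub_cancel]
  have h2 : 2 * (m + 1) - 1 = 2 * m + 1 := by omega
  rw [h2]
  field_simp
  ring


lemma aux_int {n : ℕ} (hn : 1 ≤ n) (T : ℝ) (hT : 0 ≤ T) :
    ∫ y in Set.Ioc (0:ℝ) T, y ^ (2 * n - 1) * ((1 + y ^ 2) ^ (n + 1))⁻¹ =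
      (T ^ 2 / (1 + T ^ 2)) ^ n / (2 * n) := by
  have hcont : Continuous (fun y : ℝ => y ^ (2 * n - 1) * ((1 + y ^ 2) ^ (n + 1))⁻¹) := by
    apply Continuous.mul (by continuity)
    apply Continuous.inv₀ (by continuity)
    intro y; positivity
  rw [← intervalIntegral.integral_of_le hT]
  rw [intervalIntegral.integral_eq_sub_of_hasDerivAt (fun y _ => aux_deriv hn y)
    (hcont.intervalIntegrable 0 T)]
  norm_num
  exact Or.inl (by omega)

/-- Lemma 12: for `0 ≤ δ < π/2`, the Fubini–Study volume of the ball of radius `δ` of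
`ℂPⁿ` equals `(πⁿ/n!) sin²ⁿ(δ)`. In the affine chart `ℂⁿ`, the ball of FS radius `δ`
around the origin is the Euclidean ball of radius `tan δ`, and the Fubini–Study volume
form is `dVol/(1+‖z‖²)ⁿ⁺¹` with respect to the Lebesgue measure. -/
theorem amoeba_stmt11 {n : ℕ} (δ : ℝ) (hδ0 : 0 ≤ δ) (hδ : δ < Real.pi / 2) :
    (∫ z : EuclideanSpace ℝ (Fin (2 * n)) in Metric.closedBall 0 (Real.tan δ),
        ((1 + ‖z‖ ^ 2) ^ (n + 1))⁻¹) =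
      Real.pi ^ n / n.factorial * Real.sin δ ^ (2 * n) := by
  have hpi := Real.pi_pos
  have hcos : 0 < Real.cos δ := Real.cos_pos_of_mem_Ioo ⟨by linarith, hδ⟩
  have hsin : 0 ≤ Real.sin δ :=
    Real.sin_nonneg_of_nonneg_of_le_pi hδ0 (by linarith)
  have hT : 0 ≤ Real.tan δ := by
    rw [Real.tan_eq_sin_div_cos]; exact div_nonneg hsin hcos.le
  set T := Real.tan δ with hTdef
  have hTs : T ^ 2 / (1 + T ^ 2) = Real.sin δ ^ 2 := by
    rw [hTdef, Real.tan_eq_sin_div_cos]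
    have h1 : Real.sin δ ^ 2 + Real.cos δ ^ 2 = 1 := Real.sin_sq_add_cos_sq δ
    field_simp
    linear_combination (-(Real.sin δ ^ 2)) * h1
  rcases Nat.eq_zero_or_pos n with rfl | hn
  · -- trivial 0-dimensional case
    haveI : Unique (EuclideanSpace ℝ (Fin 0)) := ⟨⟨0⟩, fun x => Subsingleton.elim _ _⟩
    have hball : Metric.closedBall (0 : EuclideanSpace ℝ (Fin 0)) T = Set.univ := by
      ext x
      simp [Subsingleton.elim x 0, hT]
    rw [show (2 * 0 : ℕ) = 0 from rfl] at *
    rw [hball]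
    rw [Measure.restrict_univ, integral_unique]
    have huniv : volume (Set.univ : Set (EuclideanSpace ℝ (Fin 0))) = 1 := by
      have h := (EuclideanSpace.volume_preserving_symm_measurableEquiv_toLp (ι := Fin 0)).measure_preimage
        MeasurableSet.univ.nullMeasurableSet
      simp only [Set.preimage_univ] at h
      rw [h]
      simp [MeasureTheory.volume_pi, Measure.pi_univ]
    rw [measureReal_def, huniv]
    have hd : ‖(default : EuclideanSpace ℝ (Fin 0))‖ = 0 := by
      rw [Subsingleton.elim (default : EuclideanSpace ℝ (Fin 0)) 0, norm_zero]
    simp [hd]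
    all_goals first | rfl | exact Subsingleton.elim _ _
  · haveI : Nonempty (Fin (2 * n)) := ⟨⟨0, by omega⟩⟩
    haveI : Nontrivial (EuclideanSpace ℝ (Fin (2 * n))) := inferInstance
    set f : ℝ → ℝ := Set.indicator (Set.Iic T) (fun y => ((1 + y ^ 2) ^ (n + 1))⁻¹) with hf
    have step1 : (∫ z : EuclideanSpace ℝ (Fin (2 * n)) in Metric.closedBall 0 T,
        ((1 + ‖z‖ ^ 2) ^ (n + 1))⁻¹) = ∫ z : EuclideanSpace ℝ (Fin (2 * n)), f ‖z‖ := by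
      rw [← integral_indicator measurableSet_closedBall]
      congr 1
      ext z
      by_cases h : ‖z‖ ≤ T
      · rw [Set.indicator_of_mem (by simpa [Metric.mem_closedBall, dist_zero_right] using h),
          hf, Set.indicator_of_mem (by exact h)]
      · rw [Set.indicator_of_notMem (by simpa [Metric.mem_closedBall, dist_zero_right] using h),
          hf, Set.indicator_of_notMem (by exact h)]
    have hdim : Module.finrank ℝ (EuclideanSpace ℝ (Fin (2 * n))) = 2 * n := by
      simp [finrank_euclideanSpace]
    have step2 := MeasureTheory.integral_fun_norm_addHaar
      (volume : Measure (EuclideanSpace ℝ (Fin (2 * n)))) f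
    rw [hdim] at step2
    have step3 : (∫ y in Set.Ioi (0:ℝ), y ^ (2 * n - 1) • f y) =
        ∫ y in Set.Ioc (0:ℝ) T, y ^ (2 * n - 1) * ((1 + y ^ 2) ^ (n + 1))⁻¹ := by
      have : ∀ y : ℝ, y ^ (2 * n - 1) • f y =
          Set.indicator (Set.Iic T) (fun y => y ^ (2 * n - 1) * ((1 + y ^ 2) ^ (n + 1))⁻¹) y := by
        intro y
        by_cases h : y ∈ Set.Iic T
        · rw [hf, Set.indicator_of_mem h, Set.indicator_of_mem h, smul_eq_mul]
        · rw [hf, Set.indicator_of_notMem h, Set.indicator_of_notMem h, smul_zero]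
      simp_rw [this]
      rw [setIntegral_indicator measurableSet_Iic, Set.Ioi_inter_Iic]
    have hvol : (volume (Metric.ball (0 : EuclideanSpace ℝ (Fin (2 * n))) 1)).toReal =
        π ^ n / n.factorial := by
      rw [EuclideanSpace.volume_ball]
      rw [Fintype.card_fin]
      have h1 : ((2 * n : ℕ) : ℝ) / 2 + 1 = (n : ℝ) + 1 := by push_cast; ring
      rw [h1, Real.Gamma_nat_eq_factorial]
      rw [ENNReal.toReal_mul, ENNReal.toReal_pow, ENNReal.toReal_ofReal (by norm_num),
        one_pow, one_mul, ENNReal.toReal_ofReal (by positivity)]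
      rw [show Real.sqrt π ^ (2 * n) = (Real.sqrt π ^ 2) ^ n by rw [← pow_mul],
        Real.sq_sqrt Real.pi_pos.le]
    rw [step1, step2, step3, aux_int hn T hT, measureReal_def, hvol, hTs]
    rw [nsmul_eq_mul, smul_eq_mul]
    have hn' : (n : ℝ) ≠ 0 := Nat.cast_ne_zero.mpr (by omega)
    rw [← pow_mul, mul_comm 2 n]
    push_cast
    field_simp
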